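/- arXiv:1205.2740 — 3 statements merged into one kernel-verified Lean document; each statement's English description precedes it below -/
import Mathlib

section
/- Let ι be a finite type, let v b : ι → ℝ, and let μ σ be finite subsets of ι. Suppose (a) ∑_{i ∈ μ} b i ≥ ∑_{j ∈ σ} b j, (b) b i ≤ v i for all i ∈ μ \ σ, (c) v j ≤ b j for all j ∈ σ \ μ, and (d) σ maximizes total value in the sense that ∑_{j ∈ σ} v j ≥ ∑_{i ∈ μ} v i. Then ∑_{i ∈ μ} v i = ∑_{j ∈ σ} v j. -/
/-- With conservative bidders, the MPP_CA allocation μ has the same total value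
as the efficiency-maximizing (VCG) allocation σ: the price of anarchy is 1. -/
theorem mpp_conservative_poa_one {ι : Type*} [Fintype ι] [DecidableEq ι]
    (v b : ι → ℝ) (μ σ : Finset ι)
    (hbids : ∑ i ∈ μ, b i ≥ ∑ j ∈ σ, b j)
    (hconservative : ∀ i ∈ μ \ σ, b i ≤ v i)
    (hlosers : ∀ j ∈ σ \ μ, v j ≤ b j)
    (hopt : ∑ j ∈ σ, v j ≥ ∑ i ∈ μ, v i) :
    ∑ i ∈ μ, v i = ∑ j ∈ σ, v j := by
  have hbm := Finset.sum_inter_add_sum_sdiff μ σ b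
  have hbs := Finset.sum_inter_add_sum_sdiff σ μ b
  have hvm := Finset.sum_inter_add_sum_sdiff μ σ v
  have hvs := Finset.sum_inter_add_sum_sdiff σ μ v
  have hcomm : σ ∩ μ = μ ∩ σ := Finset.inter_comm σ μ
  rw [hcomm] at hbs hvs
  have h1 : ∑ i ∈ σ \ μ, b i ≤ ∑ i ∈ μ \ σ, b i := by linarith
  have h2 : ∑ i ∈ μ \ σ, b i ≤ ∑ i ∈ μ \ σ, v i := Finset.sum_le_sum hconservative
  have h3 : ∑ i ∈ σ \ μ, v i ≤ ∑ i ∈ σ \ μ, b i := Finset.sum_le_sum hlosers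
  linarith
end

section
/- Let k ≥ 2 be a natural number, let b : ℕ → ℝ satisfy b i ≥ 0 for all i, let p : ℕ → ℝ, and let S : ℝ. Suppose p 1 ≥ max (b 2) (S − ∑_{i=2}^{k} b i), and p i ≥ b (i+1) for every i with 2 ≤ i ≤ k. Then ∑_{i=1}^{k} p i ≥ S/2. -/
/-- Revenue lower bound for the MPP cardinal auction: if the top winner pays at
least `max (b 2) (S - ∑_{i=2}^k b i)` and each other winner `i` (for `2 ≤ i ≤ k`)
pays at least `b (i+1)`, with all bids nonnegative, then the total payment
`∑_{i=1}^k p i` is at least `S / 2`. -/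
theorem mpp_revenue_lower_bound (k : ℕ) (hk : 2 ≤ k) (b p : ℕ → ℝ) (S : ℝ)
    (hb : ∀ i, 0 ≤ b i)
    (hp1 : p 1 ≥ max (b 2) (S - ∑ i ∈ Finset.Icc 2 k, b i))
    (hpi : ∀ i, 2 ≤ i → i ≤ k → p i ≥ b (i + 1)) :
    ∑ i ∈ Finset.Icc 1 k, p i ≥ S / 2 := by
  set B : ℝ := ∑ i ∈ Finset.Icc 2 k, b i with hB
  -- split off the first term
  have hsplit : ∑ i ∈ Finset.Icc 1 k, p i = p 1 + ∑ i ∈ Finset.Icc 2 k, p i := by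
    rw [show Finset.Icc 1 k = Finset.Ico 1 (k+1) by rw [Finset.Ico_add_one_right_eq_Icc],
        show Finset.Icc 2 k = Finset.Ico 2 (k+1) by rw [Finset.Ico_add_one_right_eq_Icc]]
    rw [Finset.sum_eq_sum_Ico_succ_bot (by omega : 1 < k + 1)]
  -- tail bound
  have htail : ∑ i ∈ Finset.Icc 2 k, p i ≥ ∑ i ∈ Finset.Icc 2 k, b (i + 1) :=
    Finset.sum_le_sum (fun i hi => by
      simp only [Finset.mem_Icc] at hi; exact hpi i hi.1 hi.2)
  have hshift : ∑ i ∈ Finset.Icc 2 k, b (i + 1) = ∑ i ∈ Finset.Icc 3 (k + 1), b i := by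
    rw [show Finset.Icc 3 (k+1) = Finset.map ⟨Nat.succ, Nat.succ_injective⟩ (Finset.Icc 2 k) by
      rw [Finset.map_eq_image]; ext x
      simp only [Finset.mem_image, Finset.mem_Icc, Function.Embedding.coeFn_mk]
      constructor
      · intro h; exact ⟨x - 1, by omega, by omega⟩
      · rintro ⟨a, ha, rfl⟩; omega]
    rw [Finset.sum_map]
    rfl
  have hsub : ∑ i ∈ Finset.Icc 3 (k + 1), b i ≥ ∑ i ∈ Finset.Icc 3 k, b i := by
    apply Finset.sum_le_sum_of_subset_of_nonneg
    · exact Finset.Icc_subset_Icc_right (by omega)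
    · intro i _ _; exact hb i
  have hBsplit : B = b 2 + ∑ i ∈ Finset.Icc 3 k, b i := by
    rw [hB, show Finset.Icc 2 k = Finset.Ico 2 (k+1) by rw [Finset.Ico_add_one_right_eq_Icc],
        Finset.sum_eq_sum_Ico_succ_bot (by omega : 2 < k + 1)]
    rw [show Finset.Icc 3 k = Finset.Ico 3 (k+1) by rw [Finset.Ico_add_one_right_eq_Icc]]
  have htail' : ∑ i ∈ Finset.Icc 2 k, p i ≥ B - b 2 := by
    rw [hBsplit]; linarith [htail, hshift ▸ htail, hsub]
  have htail0 : ∑ i ∈ Finset.Icc 2 k, p i ≥ 0 := by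
    calc (0:ℝ) ≤ ∑ i ∈ Finset.Icc 2 k, b (i + 1) :=
          Finset.sum_nonneg (fun i _ => hb _)
      _ ≤ _ := htail
  have h1 : p 1 ≥ b 2 := le_trans (le_max_left _ _) hp1
  have h2 : p 1 ≥ S - B := le_trans (le_max_right _ _) hp1
  rcases le_or_gt B (S / 2) with h | h
  · linarith
  · linarith
end

section
/- Fix a real ε with 0 < ε ≤ 50. Over ι = Fin 3, let the cardinality constraints be k = (1, 2, 2), the values v = (100, 50, ε), and the bids b = (100, 100, 50). Call a finite subset A of Fin 3 feasible if every i ∈ A satisfies A.card ≤ k i. Then: (i) the maximum of ∑_{i ∈ A} v i over all feasible A equals 100, attained by the singleton {0}; (ii) the feasible set maximizing ∑_{i ∈ A} b i is {1, 2}, with bid-sum 150; and (iii) ∑_{i ∈ {1,2}} v i = 50 + ε. -/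
/-- An allocation `A` is feasible for cardinality constraints `k` if every
bidder in `A` tolerates an allocation of size `A.card`. -/
def Feasible (k : Fin 3 → ℕ) (A : Finset (Fin 3)) : Prop :=
  ∀ i ∈ A, A.card ≤ k i

/-- Tightness of the PoA bound 2 for MPP_CA with rational bidders: with
constraints (1,2,2), values (100,50,ε) and bids (100,100,50), the efficient
value is 100 (attained by {0}), the unique bid-maximizing feasible set is
{1,2} with bid-sum 150, and its total value is only 50 + ε. -/
theorem mpp_poa_tightness (ε : ℝ) (hε0 : 0 < ε) (hε : ε ≤ 50)
    (k : Fin 3 → ℕ) (hk : k = ![1, 2, 2])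
    (v : Fin 3 → ℝ) (hv : v = ![100, 50, ε])
    (b : Fin 3 → ℝ) (hb : b = ![100, 100, 50]) :
    (Feasible k {0} ∧ ∑ i ∈ ({0} : Finset (Fin 3)), v i = 100 ∧
      ∀ A : Finset (Fin 3), Feasible k A → ∑ i ∈ A, v i ≤ 100) ∧
    (Feasible k {1, 2} ∧ ∑ i ∈ ({1, 2} : Finset (Fin 3)), b i = 150 ∧
      ∀ A : Finset (Fin 3), Feasible k A →
        ∑ i ∈ A, b i ≤ 150 ∧ (∑ i ∈ A, b i = 150 → A = {1, 2})) ∧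
    ∑ i ∈ ({1, 2} : Finset (Fin 3)), v i = 50 + ε := by
  subst hk hv hb
  refine ⟨⟨?_, ?_, ?_⟩, ⟨?_, ?_, ?_⟩, ?_⟩
  · unfold Feasible; decide
  · simp
  · intro A hA
    have hu : A ∈ (Finset.univ : Finset (Finset (Fin 3))) := Finset.mem_univ A
    fin_cases hu <;> simp_all [Feasible] <;> linarith
  · unfold Feasible; decide
  · rw [Finset.sum_pair (by decide)]; norm_num [Matrix.cons_val_two]
  · intro A hA
    have hu : A ∈ (Finset.univ : Finset (Finset (Fin 3))) := Finset.mem_univ A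
    fin_cases hu <;> simp_all [Feasible] <;>
      first
        | (constructor <;> intros <;> first | rfl | linarith)
        | linarith
  · rw [Finset.sum_pair (by decide)]; norm_num [Matrix.cons_val_two]
end
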